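/- Let Y_i ~ Beta(α_i, α₀ − α_i) and Y_j ~ Beta(α_j, α₀ − α_j), where α_i = C_i/K^c, α_j = C_j/K^c for constants C_i, C_j > 0 and c > 1, and α₀ = Σ_k α_k = Θ(K^{1−c}). Then for any threshold x₀ = o(1) (as K → ∞), the ratio P(Y_i > x₀)/P(Y_j > x₀) is bounded above and below by positive constants independent of K. -/

import Mathlib

open Filter

/-- Upper-tail probability P(Y > x₀) for Y ~ Beta(a, b), written as the
normalized incomplete Beta integral. -/
noncomputable def betaTailProb (a b x0 : ℝ) : ℝ :=
  (∫ x in x0..1, x ^ (a - 1) * (1 - x) ^ (b - 1)) /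
    (∫ x in (0:ℝ)..1, x ^ (a - 1) * (1 - x) ^ (b - 1))



section BetaTailAux

open MeasureTheory intervalIntegral Set Topology

set_option maxHeartbeats 1000000

section aux
variable {a b x0 : ℝ}

lemma rpow_factor_le_two (hb : 0 < b) (hb1 : b ≤ 1) {y : ℝ} (hy : 1/2 ≤ y) :
    y ^ (b - 1) ≤ 2 := by
  have h1 : y ^ (b-1) ≤ (1/2 : ℝ) ^ (b-1) :=
    Real.rpow_le_rpow_of_nonpos (by norm_num) hy (by linarith)
  have h2 : (1/2 : ℝ) ^ (b-1) ≤ (1/2 : ℝ) ^ (-1 : ℝ) :=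
    Real.rpow_le_rpow_of_exponent_ge (by norm_num) (by norm_num) (by linarith)
  have h3 : (1/2 : ℝ) ^ (-1 : ℝ) = 2 := by
    rw [Real.rpow_neg_one]; norm_num
  linarith

lemma contF {s : Set ℝ} (hs : ∀ x ∈ s, 0 < x ∧ x < 1) :
    ContinuousOn (fun x : ℝ => x ^ (a - 1) * (1 - x) ^ (b - 1)) s := by
  apply ContinuousOn.mul
  · intro x hx
    exact (Real.continuousAt_rpow_const x (a-1) (Or.inl (ne_of_gt (hs x hx).1))).continuousWithinAt
  · intro x hx
    refine (ContinuousAt.rpow_const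
      (f := fun x : ℝ => 1 - x) ((continuous_const.sub continuous_id).continuousAt)
      (Or.inl ?_)).continuousWithinAt
    have := (hs x hx).2
    show (1:ℝ) - x ≠ 0
    intro h
    nlinarith [sub_eq_zero.mp h]

lemma intF (ha : 0 < a) (ha1 : a ≤ 1) (hb : 0 < b) (hb1 : b ≤ 1) :
    IntervalIntegrable (fun x : ℝ => x ^ (a - 1) * (1 - x) ^ (b - 1)) volume 0 1 := by
  have hIoc1 : (Set.uIoc (0:ℝ) (1/2)) = Ioc (0:ℝ) (1/2) := uIoc_of_le (by norm_num)
  have hIoc2 : (Set.uIoc (1/2:ℝ) 1) = Ioc (1/2:ℝ) 1 := uIoc_of_le (by norm_num)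
  have p1 : IntervalIntegrable (fun x : ℝ => x ^ (a - 1) * (1 - x) ^ (b - 1)) volume 0 (1/2) := by
    apply IntervalIntegrable.mono_fun'
      (g := fun x : ℝ => 2 * x ^ (a - 1))
      ((intervalIntegral.intervalIntegrable_rpow' (by linarith)).const_mul 2)
    · exact (contF (by rw [hIoc1]; rintro x ⟨h1, h2⟩; constructor <;> linarith)).aestronglyMeasurable
        measurableSet_uIoc
    · refine (ae_restrict_mem measurableSet_uIoc).mono fun x hx => ?_
      rw [hIoc1] at hx
      have hx1 : (0:ℝ) < x := hx.1
      have hx2 : x ≤ 1/2 := hx.2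
      have h1 : (0:ℝ) ≤ x ^ (a-1) := Real.rpow_nonneg hx1.le _
      have h2 : (0:ℝ) ≤ (1-x) ^ (b-1) := Real.rpow_nonneg (by linarith) _
      show ‖x ^ (a-1) * (1-x) ^ (b-1)‖ ≤ 2 * x ^ (a-1)
      rw [Real.norm_eq_abs, abs_of_nonneg (mul_nonneg h1 h2)]
      calc x ^ (a-1) * (1-x) ^ (b-1) ≤ x ^ (a-1) * 2 :=
            mul_le_mul_of_nonneg_left (rpow_factor_le_two hb hb1 (by linarith)) h1
        _ = 2 * x ^ (a-1) := by ring
  have p2 : IntervalIntegrable (fun x : ℝ => x ^ (a - 1) * (1 - x) ^ (b - 1)) volume (1/2) 1 := by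
    have hg : IntervalIntegrable (fun x : ℝ => (1 - x) ^ (b - 1)) volume (1/2) 1 := by
      have := (intervalIntegral.intervalIntegrable_rpow' (a := 0) (b := 1/2)
        (r := b - 1) (by linarith)).comp_sub_left 1
      norm_num at this
      exact this.symm
    apply IntervalIntegrable.mono_fun' (g := fun x : ℝ => 2 * (1 - x) ^ (b - 1)) (hg.const_mul 2)
    · have hres : volume.restrict (Set.uIoc (1/2:ℝ) 1) = volume.restrict (Ioo (1/2:ℝ) 1) := by
        rw [hIoc2]
        exact Measure.restrict_congr_set Ioo_ae_eq_Ioc.symm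
      rw [hres]
      exact (contF (by rintro x ⟨h1, h2⟩; exact ⟨by linarith, h2⟩)).aestronglyMeasurable
        measurableSet_Ioo
    · refine (ae_restrict_mem measurableSet_uIoc).mono fun x hx => ?_
      rw [hIoc2] at hx
      have hx1 : (1/2:ℝ) < x := hx.1
      have hx2 : x ≤ 1 := hx.2
      have h1 : (0:ℝ) ≤ x ^ (a-1) := Real.rpow_nonneg (by linarith) _
      have h2 : (0:ℝ) ≤ (1-x) ^ (b-1) := Real.rpow_nonneg (by linarith) _
      show ‖x ^ (a-1) * (1-x) ^ (b-1)‖ ≤ 2 * (1-x) ^ (b-1)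
      rw [Real.norm_eq_abs, abs_of_nonneg (mul_nonneg h1 h2)]
      exact mul_le_mul_of_nonneg_right (rpow_factor_le_two ha ha1 (by linarith)) h2
  exact p1.trans p2
end aux

section aux2
variable {a b x0 : ℝ}

lemma intH (hb : 0 < b) (s t : ℝ) :
    IntervalIntegrable (fun x : ℝ => (1 - x) ^ (b - 1)) volume s t := by
  simpa using (intervalIntegral.intervalIntegrable_rpow' (a := 1 - s) (b := 1 - t)
    (r := b - 1) (by linarith)).comp_sub_left 1

lemma int_g (ha : 0 < a) (x0 t : ℝ) :
    ∫ x in x0..t, x ^ (a - 1) = (t ^ a - x0 ^ a) / a := by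
  rw [integral_rpow (Or.inl (by linarith))]
  norm_num

lemma int_h (hb : 0 < b) (x0 t : ℝ) :
    ∫ x in x0..t, (1 - x) ^ (b - 1) = ((1 - x0) ^ b - (1 - t) ^ b) / b := by
  have h := intervalIntegral.integral_comp_sub_left (a := x0) (b := t)
    (fun u : ℝ => u ^ (b - 1)) 1
  rw [h, integral_rpow (Or.inl (by linarith))]
  norm_num
end aux2

section aux3
variable {a b x0 : ℝ}

lemma intF' (ha : 0 < a) (ha1 : a ≤ 1) (hb : 0 < b) (hb1 : b ≤ 1) {s t : ℝ}
    (hs : 0 ≤ s) (hs1 : s ≤ 1) (ht : 0 ≤ t) (ht1 : t ≤ 1) :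
    IntervalIntegrable (fun x : ℝ => x ^ (a - 1) * (1 - x) ^ (b - 1)) volume s t :=
  (intF ha ha1 hb hb1).mono_set (by
    rw [uIcc_of_le (le_refl 0 |>.trans zero_le_one)]
    exact uIcc_subset_Icc ⟨hs, hs1⟩ ⟨ht, ht1⟩)

lemma tail_lower (ha : 0 < a) (ha1 : a ≤ 1) (hb : 0 < b) (hb1 : b ≤ 1)
    (h0 : 0 ≤ x0) (h2 : x0 ≤ 1/2) :
    ((1 - x0 ^ a) / a + 1 / b) / 4 ≤ ∫ x in x0..1, x ^ (a - 1) * (1 - x) ^ (b - 1) := by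
  have hx1 : x0 ≤ 1 := by linarith
  have hFi : IntervalIntegrable (fun x : ℝ => x ^ (a - 1) * (1 - x) ^ (b - 1)) volume x0 1 :=
    intF' ha ha1 hb hb1 h0 hx1 zero_le_one le_rfl
  -- a.e. facts
  have hne1 : ∀ᵐ x ∂(volume.restrict (Icc x0 1)), x ≠ 1 := by
    refine ae_restrict_of_ae ?_
    rw [ae_iff]
    have : {x : ℝ | ¬x ≠ 1} = {1} := by ext x; simp
    rw [this, Real.volume_singleton]
  have hne0 : ∀ᵐ x ∂(volume.restrict (Icc x0 1)), x ≠ 0 := by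
    refine ae_restrict_of_ae ?_
    rw [ae_iff]
    have : {x : ℝ | ¬x ≠ 0} = {0} := by ext x; simp
    rw [this, Real.volume_singleton]
  have hN1 : ∫ x in x0..1, x ^ (a - 1) ≤ ∫ x in x0..1, x ^ (a - 1) * (1 - x) ^ (b - 1) := by
    refine integral_mono_ae_restrict hx1
      (intervalIntegral.intervalIntegrable_rpow' (by linarith)) hFi ?_
    filter_upwards [ae_restrict_mem measurableSet_Icc, hne1] with x hx hne
    have hx0 : 0 ≤ x := le_trans h0 hx.1
    have hlt : x < 1 := lt_of_le_of_ne hx.2 hne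
    have hfac : 1 ≤ (1 - x) ^ (b - 1) :=
      Real.one_le_rpow_of_pos_of_le_one_of_nonpos (by linarith) (by linarith) (by linarith)
    exact le_mul_of_one_le_right (Real.rpow_nonneg hx0 _) hfac
  have hN2 : ∫ x in x0..1, (1 - x) ^ (b - 1) ≤ ∫ x in x0..1, x ^ (a-1) * (1-x) ^ (b-1) := by
    refine integral_mono_ae_restrict hx1 (intH hb x0 1) hFi ?_
    filter_upwards [ae_restrict_mem measurableSet_Icc, hne0] with x hx hne
    have hx0 : 0 < x := lt_of_le_of_ne (le_trans h0 hx.1) (Ne.symm hne)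
    have hfac : 1 ≤ x ^ (a - 1) :=
      Real.one_le_rpow_of_pos_of_le_one_of_nonpos hx0 hx.2 (by linarith)
    exact le_mul_of_one_le_left (Real.rpow_nonneg (by linarith [hx.2]) _) hfac
  rw [int_g ha, Real.one_rpow] at hN1
  rw [int_h hb, sub_self, Real.zero_rpow hb.ne'] at hN2
  have hT0 : 0 ≤ (1 - x0 ^ a) / a :=
    div_nonneg (by linarith [Real.rpow_le_one h0 hx1 ha.le]) ha.le
  have hhalf : (1/2 : ℝ) ≤ (1 - x0) ^ b := by
    have h1 : (1/2 : ℝ) ^ b ≤ (1 - x0) ^ b :=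
      Real.rpow_le_rpow (by norm_num) (by linarith) hb.le
    have h2 : (1/2 : ℝ) ^ (1:ℝ) ≤ (1/2 : ℝ) ^ b :=
      Real.rpow_le_rpow_of_exponent_ge (by norm_num) (by norm_num) hb1
    rw [Real.rpow_one] at h2
    linarith
  have hB : 1 / (2 * b) ≤ ((1 - x0) ^ b - 0) / b := by
    rw [sub_zero, div_le_div_iff₀ (by linarith) hb]
    nlinarith
  have : 1 / (2 * b) = (1/b) / 2 := by ring
  linarith [hN2, hN1, hB.trans hN2]

lemma tail_upper (ha : 0 < a) (ha1 : a ≤ 1) (hb : 0 < b) (hb1 : b ≤ 1)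
    (h0 : 0 ≤ x0) (h2 : x0 ≤ 1/2) :
    ∫ x in x0..1, x ^ (a - 1) * (1 - x) ^ (b - 1) ≤ 2 * ((1 - x0 ^ a) / a + 1 / b) := by
  have hsplit : ∫ x in x0..1, x ^ (a-1) * (1-x) ^ (b-1)
      = (∫ x in x0..(1/2), x ^ (a-1) * (1-x) ^ (b-1))
        + ∫ x in (1/2:ℝ)..1, x ^ (a-1) * (1-x) ^ (b-1) :=
    (integral_add_adjacent_intervals
      (intF' ha ha1 hb hb1 h0 (by linarith) (by norm_num) (by norm_num))
      (intF' ha ha1 hb hb1 (by norm_num) (by norm_num) zero_le_one le_rfl)).symm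
  have hp1 : ∫ x in x0..(1/2), x ^ (a-1) * (1-x) ^ (b-1) ≤ ∫ x in x0..(1/2), 2 * x ^ (a-1) := by
    refine integral_mono_on h2
      (intF' ha ha1 hb hb1 h0 (by linarith) (by norm_num) (by norm_num))
      ((intervalIntegral.intervalIntegrable_rpow' (by linarith)).const_mul 2) fun x hx => ?_
    have hx0 : 0 ≤ x := le_trans h0 hx.1
    have hfac : (1 - x) ^ (b-1) ≤ 2 := rpow_factor_le_two hb hb1 (by linarith [hx.2])
    calc x ^ (a-1) * (1-x) ^ (b-1) ≤ x ^ (a-1) * 2 :=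
          mul_le_mul_of_nonneg_left hfac (Real.rpow_nonneg hx0 _)
      _ = 2 * x ^ (a-1) := by ring
  have hp2 : ∫ x in (1/2:ℝ)..1, x ^ (a-1) * (1-x) ^ (b-1)
      ≤ ∫ x in (1/2:ℝ)..1, 2 * (1-x) ^ (b-1) := by
    refine integral_mono_on (by norm_num)
      (intF' ha ha1 hb hb1 (by norm_num) (by norm_num) zero_le_one le_rfl)
      ((intH hb _ _).const_mul 2) fun x hx => ?_
    have hfac : x ^ (a-1) ≤ 2 := rpow_factor_le_two ha ha1 hx.1
    exact mul_le_mul_of_nonneg_right hfac (Real.rpow_nonneg (by linarith [hx.2]) _)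
  have e1 : ∫ x in x0..(1/2:ℝ), 2 * x ^ (a-1) = 2 * (((1/2:ℝ) ^ a - x0 ^ a) / a) := by
    rw [intervalIntegral.integral_const_mul, int_g ha]
  have e2 : ∫ x in (1/2:ℝ)..1, 2 * (1-x) ^ (b-1) = 2 * (((1/2:ℝ) ^ b - 0) / b) := by
    rw [intervalIntegral.integral_const_mul, int_h hb]
    norm_num [Real.zero_rpow hb.ne']
  have hha : ((1/2:ℝ) ^ a - x0 ^ a) / a ≤ (1 - x0 ^ a) / a := by
    have h12 : ((1/2:ℝ)) ^ a ≤ 1 := Real.rpow_le_one (by norm_num) (by norm_num) ha.le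
    gcongr
  have hhb : ((1/2:ℝ) ^ b - 0) / b ≤ 1 / b := by
    have h12 : ((1/2:ℝ)) ^ b ≤ 1 := Real.rpow_le_one (by norm_num) (by norm_num) hb.le
    gcongr
    linarith
  linarith [hp1, hp2, e1, e2, hsplit]
end aux3

section aux4
variable {a a' b b' x0 κ : ℝ}

lemma Tcomp (ha : 0 < a) (ha' : 0 < a') (hκ : 1 ≤ κ) (h : a' ≤ κ * a)
    (h0 : 0 ≤ x0) (h1 : x0 ≤ 1) :
    (1 - x0 ^ a) / a ≤ κ * ((1 - x0 ^ a') / a') := by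
  have hua : x0 ^ a ≤ 1 := Real.rpow_le_one h0 h1 ha.le
  have hua' : x0 ^ a' ≤ 1 := Real.rpow_le_one h0 h1 ha'.le
  rw [← mul_div_assoc, div_le_div_iff₀ ha (by positivity)]
  rcases le_total a a' with hle | hle
  · have hx : x0 ^ a' ≤ x0 ^ a := by
      rcases eq_or_lt_of_le h0 with h0' | h0'
      · rw [← h0', Real.zero_rpow ha.ne', Real.zero_rpow ha'.ne']
      · exact Real.rpow_le_rpow_of_exponent_ge h0' h1 hle
    nlinarith
  · have hp0 : 0 ≤ a' / a := by positivity
    have hp1 : a' / a ≤ 1 := by rw [div_le_one ha]; exact hle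
    have hrw : x0 ^ a' = (x0 ^ a) ^ (a' / a) := by
      rw [← Real.rpow_mul h0]
      congr 1
      field_simp
    have hAM := Real.geom_mean_le_arith_mean2_weighted
      (w₁ := a'/a) (w₂ := 1 - a'/a) (p₁ := x0 ^ a) (p₂ := 1)
      hp0 (by linarith) (Real.rpow_nonneg h0 a) zero_le_one (by ring)
    rw [Real.one_rpow, mul_one] at hAM
    have h3 : a * (a'/a * x0 ^ a + (1 - a'/a)) = a' * x0 ^ a + a - a' := by
      field_simp
      ring
    have h2 := mul_le_mul_of_nonneg_left hAM ha.le
    have key : a' * (1 - x0 ^ a) ≤ a * (1 - x0 ^ a') := by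
      rw [hrw]
      linarith [h2, h3]
    have h4 : a * (1 - x0 ^ a') ≤ κ * (1 - x0 ^ a') * a := by
      nlinarith [mul_nonneg (sub_nonneg.2 hua') ha.le]
    linarith [key, h4]

lemma tail_pos (ha : 0 < a) (ha1 : a ≤ 1) (hb : 0 < b) (hb1 : b ≤ 1)
    (h0 : 0 ≤ x0) (h2 : x0 ≤ 1/2) :
    0 < betaTailProb a b x0 := by
  have hT0 : 0 ≤ (1 - x0 ^ a) / a :=
    div_nonneg (by linarith [Real.rpow_le_one h0 (by linarith) ha.le]) ha.le
  have hb0 : 0 < 1 / b := by positivity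
  have hDl := tail_lower ha ha1 hb hb1 le_rfl (by norm_num)
  rw [Real.zero_rpow ha.ne', sub_zero] at hDl
  have ha0 : 0 < 1 / a := by positivity
  exact div_pos (lt_of_lt_of_le (by linarith) (tail_lower ha ha1 hb hb1 h0 h2))
    (lt_of_lt_of_le (by linarith) hDl)

lemma arith_ratio {S S' U U' N D N' D' : ℝ} (hS0 : 0 ≤ S) (hS'0 : 0 < S')
    (hU0 : 0 < U) (hU'0 : 0 < U') (hκ : 1 ≤ κ)
    (hNu : N ≤ 2 * S) (hN'l : S' / 4 ≤ N') (hDl : U / 4 ≤ D) (hD'u : D' ≤ 2 * U')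
    (hD'pos : 0 < D') (hSS : S ≤ κ * S') (hUU : U' ≤ κ * U) :
    N / D ≤ 64 * κ ^ 2 * (N' / D') := by
  have step1 : N / D ≤ (2 * S) / (U / 4) :=
    div_le_div₀ (by linarith) hNu (by linarith) hDl
  have step3 : (S' / 4) / (2 * U') ≤ N' / D' :=
    div_le_div₀ (le_trans (by linarith) hN'l) (by linarith) hD'pos hD'u
  have step2 : (2 * S) / (U / 4) ≤ 64 * κ ^ 2 * ((S' / 4) / (2 * U')) := by
    have e1 : (2 * S) / (U / 4) = 8 * (S / U) := by
      field_simp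
      ring
    have e2 : 64 * κ ^ 2 * ((S' / 4) / (2 * U')) = 8 * κ ^ 2 * (S' / U') := by
      field_simp
      ring
    rw [e1, e2]
    have hfrac : S / U ≤ κ ^ 2 * (S' / U') := by
      have e3 : κ ^ 2 * (S' / U') = (κ ^ 2 * S') / U' := by ring
      rw [e3, div_le_div_iff₀ hU0 hU'0]
      nlinarith [mul_le_mul_of_nonneg_right hSS hU'0.le,
        mul_le_mul_of_nonneg_left hUU (by nlinarith : (0:ℝ) ≤ κ * S')]
    nlinarith [hfrac]
  calc N / D ≤ (2 * S) / (U / 4) := step1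
    _ ≤ 64 * κ ^ 2 * ((S' / 4) / (2 * U')) := step2
    _ ≤ 64 * κ ^ 2 * (N' / D') := mul_le_mul_of_nonneg_left step3 (by positivity)

lemma ratio_le (ha : 0 < a) (ha1 : a ≤ 1) (ha' : 0 < a') (ha'1 : a' ≤ 1)
    (hb : 0 < b) (hb1 : b ≤ 1) (hb' : 0 < b') (hb'1 : b' ≤ 1)
    (h0 : 0 ≤ x0) (h2 : x0 ≤ 1/2) (hκ : 1 ≤ κ)
    (haa : a ≤ κ * a') (haa' : a' ≤ κ * a) (hbb : b ≤ κ * b') (hbb' : b' ≤ κ * b) :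
    betaTailProb a b x0 ≤ 64 * κ^2 * betaTailProb a' b' x0 := by
  have hx1 : x0 ≤ 1 := by linarith
  have hT0 : 0 ≤ (1 - x0 ^ a) / a :=
    div_nonneg (by linarith [Real.rpow_le_one h0 hx1 ha.le]) ha.le
  have hT'0 : 0 ≤ (1 - x0 ^ a') / a' :=
    div_nonneg (by linarith [Real.rpow_le_one h0 hx1 ha'.le]) ha'.le
  have hbinv : 0 < 1/b := by positivity
  have hb'inv : 0 < 1/b' := by positivity
  have hainv : 0 < 1/a := by positivity
  have ha'inv : 0 < 1/a' := by positivity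
  have hNu := tail_upper ha ha1 hb hb1 h0 h2
  have hN'l := tail_lower ha' ha'1 hb' hb'1 h0 h2
  have hDl := tail_lower ha ha1 hb hb1 le_rfl (by norm_num)
  have hD'l := tail_lower ha' ha'1 hb' hb'1 le_rfl (by norm_num)
  have hD'u := tail_upper ha' ha'1 hb' hb'1 le_rfl (by norm_num)
  rw [Real.zero_rpow ha.ne', sub_zero] at hDl
  rw [Real.zero_rpow ha'.ne', sub_zero] at hD'l hD'u
  have hD'pos : 0 < ∫ x in (0:ℝ)..1, x ^ (a'-1) * (1-x) ^ (b'-1) :=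
    lt_of_lt_of_le (by linarith) hD'l
  have hTT : (1 - x0 ^ a) / a ≤ κ * ((1 - x0 ^ a') / a') := Tcomp ha ha' hκ haa' h0 hx1
  have hbineq : 1/b ≤ κ * (1/b') := by
    have e : κ * (1/b') = κ/b' := by ring
    rw [e, div_le_div_iff₀ hb hb']
    nlinarith
  have haineq : 1/a' ≤ κ * (1/a) := by
    have e : κ * (1/a) = κ/a := by ring
    rw [e, div_le_div_iff₀ ha' ha]
    nlinarith
  have hb'ineq : 1/b' ≤ κ * (1/b) := by
    have e : κ * (1/b) = κ/b := by ring
    rw [e, div_le_div_iff₀ hb' hb]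
    nlinarith
  rw [betaTailProb, betaTailProb]
  exact arith_ratio (S := (1 - x0 ^ a)/a + 1/b) (S' := (1 - x0 ^ a')/a' + 1/b')
    (U := 1/a + 1/b) (U' := 1/a' + 1/b')
    (by linarith) (by linarith) (by linarith) (by linarith) hκ
    hNu hN'l hDl hD'u hD'pos (by linarith) (by linarith)
end aux4

end BetaTailAux

set_option maxHeartbeats 1000000

/-- Comparability of the Dirichlet-marginal upper tails: for α_i = C_i/K^c,
α_j = C_j/K^c, α₀ = Θ(K^{1−c}) and any threshold x₀ = o(1), the ratio
P(Y_i > x₀)/P(Y_j > x₀) of the Beta marginal tails is bounded above and below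
by positive constants independent of K. -/
theorem stmt16 (Ci Cj c : ℝ) (hCi : 0 < Ci) (hCj : 0 < Cj) (hc : 1 < c)
    (α0 x0 : ℕ → ℝ)
    (hα0 : ∃ c1 c2 : ℝ, 0 < c1 ∧ 0 < c2 ∧ ∀ᶠ K : ℕ in atTop,
      c1 * (K:ℝ) ^ (1 - c) ≤ α0 K ∧ α0 K ≤ c2 * (K:ℝ) ^ (1 - c))
    (hgap : ∀ᶠ K : ℕ in atTop, Ci / (K:ℝ) ^ c < α0 K ∧ Cj / (K:ℝ) ^ c < α0 K)
    (hx0 : Tendsto x0 atTop (nhds 0))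
    (hx0' : ∀ᶠ K : ℕ in atTop, 0 < x0 K ∧ x0 K < 1) :
    ∃ m M : ℝ, 0 < m ∧ ∀ᶠ K : ℕ in atTop,
      m ≤ betaTailProb (Ci / (K:ℝ) ^ c) (α0 K - Ci / (K:ℝ) ^ c) (x0 K) /
            betaTailProb (Cj / (K:ℝ) ^ c) (α0 K - Cj / (K:ℝ) ^ c) (x0 K) ∧
      betaTailProb (Ci / (K:ℝ) ^ c) (α0 K - Ci / (K:ℝ) ^ c) (x0 K) /
            betaTailProb (Cj / (K:ℝ) ^ c) (α0 K - Cj / (K:ℝ) ^ c) (x0 K) ≤ M := by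
  obtain ⟨c1, c2, hc1, hc2, hα0ev⟩ := hα0
  set κ : ℝ := max (max (Ci/Cj) (Cj/Ci)) 2 with hκdef
  have hκ2 : (2:ℝ) ≤ κ := le_max_right _ _
  have hκ1 : (1:ℝ) ≤ κ := by linarith
  have hκij : Ci ≤ κ * Cj := by
    have h1 : Ci/Cj ≤ κ := le_trans (le_max_left _ _) (le_max_left _ _)
    rw [div_le_iff₀ hCj] at h1
    linarith [mul_comm κ Cj]
  have hκji : Cj ≤ κ * Ci := by
    have h1 : Cj/Ci ≤ κ := le_trans (le_max_right _ _) (le_max_left _ _)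
    rw [div_le_iff₀ hCi] at h1
    linarith [mul_comm κ Ci]
  refine ⟨(64 * κ^2)⁻¹, 64 * κ^2, by positivity, ?_⟩
  -- eventual facts
  have hKcv : Tendsto (fun K : ℕ => (K:ℝ)^c) atTop atTop :=
    (tendsto_rpow_atTop (by linarith)).comp tendsto_natCast_atTop_atTop
  have E5 : ∀ᶠ K : ℕ in atTop, max Ci Cj ≤ (K:ℝ)^c := hKcv.eventually_ge_atTop _
  have hbase : Tendsto (fun K : ℕ => (K:ℝ)^(1-c)) atTop (nhds 0) := by
    have h := (tendsto_rpow_neg_atTop (y := c - 1) (by linarith)).comp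
      tendsto_natCast_atTop_atTop
    simpa [neg_sub, Function.comp_def] using h
  have E6 : ∀ᶠ K : ℕ in atTop, c2 * (K:ℝ)^(1-c) < 1 := by
    have h : Tendsto (fun K : ℕ => c2 * (K:ℝ)^(1-c)) atTop (nhds 0) := by
      simpa using hbase.const_mul c2
    exact h.eventually_lt_const one_pos
  have E4 : ∀ᶠ K : ℕ in atTop, x0 K < 1/2 := hx0.eventually_lt_const (by norm_num)
  have E7 : ∀ᶠ K : ℕ in atTop, max (2*Ci/c1) (2*Cj/c1) ≤ (K:ℝ) :=
    tendsto_natCast_atTop_atTop.eventually_ge_atTop _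
  have E8 : ∀ᶠ K : ℕ in atTop, (1:ℝ) ≤ (K:ℝ) := tendsto_natCast_atTop_atTop.eventually_ge_atTop _
  filter_upwards [hα0ev, hgap, hx0', E4, E5, E6, E7, E8] with K hα hg hx hx4 h5 h6 h7 h8
  have hKpos : (0:ℝ) < K := by linarith
  have hKc : (0:ℝ) < (K:ℝ)^c := Real.rpow_pos_of_pos hKpos c
  set ai := Ci / (K:ℝ)^c with hai
  set aj := Cj / (K:ℝ)^c with haj
  have hai0 : 0 < ai := div_pos hCi hKc
  have haj0 : 0 < aj := div_pos hCj hKc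
  have hai1 : ai ≤ 1 := by
    rw [hai, div_le_one hKc]
    exact le_trans (le_max_left _ _) h5
  have haj1 : aj ≤ 1 := by
    rw [haj, div_le_one hKc]
    exact le_trans (le_max_right _ _) h5
  have hbi0 : 0 < α0 K - ai := by linarith [hg.1]
  have hbj0 : 0 < α0 K - aj := by linarith [hg.2]
  have hbi1 : α0 K - ai ≤ 1 := by linarith [hα.2, h6]
  have hbj1 : α0 K - aj ≤ 1 := by linarith [hα.2, h6]
  -- a_i, a_j ≤ α0/2
  have hKsub : (K:ℝ)^(1-c) = (K:ℝ) / (K:ℝ)^c := by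
    rw [Real.rpow_sub hKpos, Real.rpow_one]
  have hhalf : ∀ C : ℝ, 0 < C → 2*C/c1 ≤ (K:ℝ) → C / (K:ℝ)^c ≤ α0 K / 2 := by
    intro C hC hK
    have h1 : C ≤ c1 * (K:ℝ) / 2 := by
      rw [div_le_iff₀ hc1] at hK
      nlinarith
    have h2 : C / (K:ℝ)^c ≤ (c1 * (K:ℝ) / 2) / (K:ℝ)^c := by gcongr
    have h3 : (c1 * (K:ℝ) / 2) / (K:ℝ)^c = c1 * (K:ℝ)^(1-c) / 2 := by
      rw [hKsub]
      ring
    rw [h3] at h2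
    linarith [hα.1]
  have hihalf : ai ≤ α0 K / 2 := hhalf Ci hCi (le_trans (le_max_left _ _) h7)
  have hjhalf : aj ≤ α0 K / 2 := hhalf Cj hCj (le_trans (le_max_right _ _) h7)
  -- κ comparisons
  have haaij : ai ≤ κ * aj := by
    rw [hai, haj]
    calc Ci / (K:ℝ)^c ≤ (κ * Cj) / (K:ℝ)^c := by gcongr
      _ = κ * (Cj / (K:ℝ)^c) := by ring
  have haaji : aj ≤ κ * ai := by
    rw [hai, haj]
    calc Cj / (K:ℝ)^c ≤ (κ * Ci) / (K:ℝ)^c := by gcongr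
      _ = κ * (Ci / (K:ℝ)^c) := by ring
  have hbbij : α0 K - ai ≤ κ * (α0 K - aj) := by
    nlinarith [mul_nonneg (by linarith : (0:ℝ) ≤ κ - 2) hbj0.le]
  have hbbji : α0 K - aj ≤ κ * (α0 K - ai) := by
    nlinarith [mul_nonneg (by linarith : (0:ℝ) ≤ κ - 2) hbi0.le]
  have hx00 : 0 ≤ x0 K := hx.1.le
  have hx02 : x0 K ≤ 1/2 := hx4.le
  have hPj : 0 < betaTailProb aj (α0 K - aj) (x0 K) :=
    tail_pos haj0 haj1 hbj0 hbj1 hx00 hx02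
  have hPi : 0 < betaTailProb ai (α0 K - ai) (x0 K) :=
    tail_pos hai0 hai1 hbi0 hbi1 hx00 hx02
  have hup : betaTailProb ai (α0 K - ai) (x0 K)
      ≤ 64 * κ^2 * betaTailProb aj (α0 K - aj) (x0 K) :=
    ratio_le hai0 hai1 haj0 haj1 hbi0 hbi1 hbj0 hbj1 hx00 hx02 hκ1 haaij haaji hbbij hbbji
  have hdown : betaTailProb aj (α0 K - aj) (x0 K)
      ≤ 64 * κ^2 * betaTailProb ai (α0 K - ai) (x0 K) :=
    ratio_le haj0 haj1 hai0 hai1 hbj0 hbj1 hbi0 hbi1 hx00 hx02 hκ1 haaji haaij hbbji hbbij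
  have hκsq : (0:ℝ) < 64 * κ^2 := by positivity
  constructor
  · rw [le_div_iff₀ hPj]
    have h := mul_le_mul_of_nonneg_left hdown (le_of_lt (inv_pos.2 hκsq))
    rwa [inv_mul_cancel_left₀ hκsq.ne'] at h
  · rw [div_le_iff₀ hPj]
    linarith [hup, mul_comm (64 * κ^2) (betaTailProb aj (α0 K - aj) (x0 K))]
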